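/- For π-reversible P and nonempty proper S ⊂ X, the KL divergence D_KL^π(PG_S ‖ Π) equals T(S) − U(S), where T(S) = Σ_x π(x)[φ(P(x,S)) + φ(P(x,S'))] and U(S) = φ(π(S)) + φ(π(S')) with φ(t) = t log t; moreover T and U are supermodular set functions of S, so the objective is a difference of two supermodular (equivalently submodular) functions. -/

import Mathlib

open Finset Matrix

namespace GpgStmt

noncomputable section

variable {X : Type*}

/-- Matrix with all rows equal to π. -/
def Pimat {X : Type*} (π : X → ℝ) : Matrix X X ℝ := Matrix.of fun _ y => π y

def IsStochastic [Fintype X] (P : Matrix X X ℝ) : Prop :=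
  (∀ x y, 0 ≤ P x y) ∧ ∀ x, ∑ y, P x y = 1

/-- π-stationary transition matrix. -/
def IsStationary [Fintype X] (π : X → ℝ) (P : Matrix X X ℝ) : Prop :=
  IsStochastic P ∧ ∀ y, ∑ x, π x * P x y = π y

/-- π-reversible transition matrix. -/
def IsReversible [Fintype X] (π : X → ℝ) (P : Matrix X X ℝ) : Prop :=
  IsStochastic P ∧ ∀ x y, π x * P x y = π y * P y x

/-- mass of the orbit O_i = {x | o x = i}. -/
def orbMass [Fintype X] {k : ℕ} (π : X → ℝ) (o : X → Fin k) (i : Fin k) : ℝ :=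
  ∑ x ∈ Finset.filter (fun x => o x = i) Finset.univ, π x

/-- Gibbs kernel of the orbit partition induced by o. -/
def gibbs [Fintype X] {k : ℕ} (π : X → ℝ) (o : X → Fin k) : Matrix X X ℝ :=
  Matrix.of fun x y => if o x = o y then π y / orbMass π o (o x) else 0

/-- Projection chain P̄ of P with respect to the orbit partition induced by o. -/
def projChain [Fintype X] {k : ℕ} (π : X → ℝ) (o : X → Fin k) (P : Matrix X X ℝ) :
    Matrix (Fin k) (Fin k) ℝ :=
  Matrix.of fun i j => (1 / orbMass π o i) *
    ∑ x ∈ Finset.filter (fun x => o x = i) Finset.univ,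
      ∑ y ∈ Finset.filter (fun y => o y = j) Finset.univ, π x * P x y

/-- π-weighted KL divergence between transition matrices, with 0·log(0/a) = 0. -/
def klDiv {X : Type*} [Fintype X] (π : X → ℝ) (Q R : Matrix X X ℝ) : ℝ :=
  ∑ x, ∑ y, π x * Q x y * Real.log (Q x y / R x y)

/-- ℓ²(π)-adjoint of a matrix. -/
def piAdj [Fintype X] (π : X → ℝ) (M : Matrix X X ℝ) : Matrix X X ℝ :=
  Matrix.of fun x y => π y * M y x / π x

/-- squared π-weighted Frobenius norm ‖M‖²_{F,π} = Tr(M*M). -/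
def frobSq [Fintype X] (π : X → ℝ) (M : Matrix X X ℝ) : ℝ :=
  Matrix.trace (piAdj π M * M)

/-- π-mass of a finite set. -/
def mass [Fintype X] (π : X → ℝ) (S : Finset X) : ℝ := ∑ x ∈ S, π x

/-- Two-block Gibbs kernel G_S for the partition X = S ⊔ Sᶜ. -/
def gibbsTwo [Fintype X] [DecidableEq X] (π : X → ℝ) (S : Finset X) : Matrix X X ℝ :=
  Matrix.of fun x y =>
    if x ∈ S then (if y ∈ S then π y / mass π S else 0)
    else (if y ∈ S then 0 else π y / mass π Sᶜ)

/-- g(S) = (1/(π(S)π(S'))) Σ_{x∈S,y∈S'} π(x) P²(x,y). -/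
def gfun [Fintype X] [DecidableEq X] (π : X → ℝ) (P : Matrix X X ℝ) (S : Finset X) : ℝ :=
  (1 / (mass π S * mass π Sᶜ)) * ∑ x ∈ S, ∑ y ∈ Sᶜ, π x * (P * P) x y

/-- h(S) = (1/π(S)) Σ_{x∈S,y∈S'} π(x) P²(x,y). -/
def hfun [Fintype X] [DecidableEq X] (π : X → ℝ) (P : Matrix X X ℝ) (S : Finset X) : ℝ :=
  (1 / mass π S) * ∑ x ∈ S, ∑ y ∈ Sᶜ, π x * (P * P) x y

/-- Ergodicity (primitivity): some power of P has all entries positive. -/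
def IsErgodic [Fintype X] [DecidableEq X] (P : Matrix X X ℝ) : Prop :=
  ∃ m : ℕ, ∀ x y, 0 < (P ^ m) x y

/-- Shannon entropy of π. -/
def shannonEnt [Fintype X] (π : X → ℝ) : ℝ := -∑ x, π x * Real.log (π x)

/-- Entropy rate H_π(Q). -/
def entRate [Fintype X] (π : X → ℝ) (Q : Matrix X X ℝ) : ℝ :=
  -∑ x, ∑ y, π x * Q x y * Real.log (Q x y)

/-- Supermodular set function on 2^X. -/
def Supermodular {X : Type*} [DecidableEq X] (F : Finset X → ℝ) : Prop :=
  ∀ A B : Finset X, F A + F B ≤ F (A ∩ B) + F (A ∪ B)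

/-- Submodular set function on 2^X. -/
def Submodular {X : Type*} [DecidableEq X] (F : Finset X → ℝ) : Prop :=
  ∀ A B : Finset X, F (A ∩ B) + F (A ∪ B) ≤ F A + F B

/-- φ(t) = t log t. -/
def phiEnt (t : ℝ) : ℝ := t * Real.log t

/-- T(S) = Σ_x π(x)[φ(P(x,S)) + φ(P(x,S'))]. -/
def Tfun [Fintype X] [DecidableEq X] (π : X → ℝ) (P : Matrix X X ℝ) (S : Finset X) : ℝ :=
  ∑ x, π x * (phiEnt (∑ y ∈ S, P x y) + phiEnt (∑ y ∈ Sᶜ, P x y))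

/-- U(S) = φ(π(S)) + φ(π(S')). -/
def Ufun [Fintype X] [DecidableEq X] (π : X → ℝ) (S : Finset X) : ℝ :=
  phiEnt (mass π S) + phiEnt (mass π Sᶜ)


private lemma convex4 {f : ℝ → ℝ} (hf : ConvexOn ℝ (Set.Ici 0) f) {a b c d : ℝ}
    (ha : 0 ≤ a) (hab : a ≤ b) (hac : a ≤ c) (hsum : a + d = b + c) :
    f b + f c ≤ f a + f d := by
  have hbd : b ≤ d := by linarith
  rcases eq_or_lt_of_le hab with h | h
  · have hc : c = d := by linarith
    rw [← h, hc]
  · have had : a < d := lt_of_lt_of_le h hbd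
    set t : ℝ := (b - a) / (d - a) with ht
    have hda : d - a ≠ 0 := by linarith
    have htd : t * (d - a) = b - a := div_mul_cancel₀ _ hda
    have ht0 : 0 ≤ t := div_nonneg (by linarith) (by linarith)
    have ht1 : t ≤ 1 := by rw [ht, div_le_one (by linarith)]; linarith
    have hb : (1 - t) • a + t • d = b := by
      simp only [smul_eq_mul]; nlinarith [htd]
    have hc : t • a + (1 - t) • d = c := by
      simp only [smul_eq_mul]; nlinarith [htd]
    have hd0 : (0:ℝ) ≤ d := le_trans ha (le_of_lt had)
    have h1 := hf.2 (Set.mem_Ici.2 ha) (Set.mem_Ici.2 hd0) (sub_nonneg.2 ht1) ht0 (by ring)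
    have h2 := hf.2 (Set.mem_Ici.2 ha) (Set.mem_Ici.2 hd0) ht0 (sub_nonneg.2 ht1) (by ring)
    rw [hb] at h1; rw [hc] at h2
    simp only [smul_eq_mul] at h1 h2
    nlinarith [h1, h2]

private lemma phi_convex : ConvexOn ℝ (Set.Ici 0) phiEnt := by
  have := Real.convexOn_mul_log
  convert this using 1
  rfl

private lemma key_super [Fintype X] [DecidableEq X] (μ : X → ℝ) (hμ : ∀ x, 0 ≤ μ x)
    (A B : Finset X) :
    (phiEnt (∑ y ∈ A, μ y) + phiEnt (∑ y ∈ Aᶜ, μ y)) +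
      (phiEnt (∑ y ∈ B, μ y) + phiEnt (∑ y ∈ Bᶜ, μ y)) ≤
    (phiEnt (∑ y ∈ (A ∩ B), μ y) + phiEnt (∑ y ∈ (A ∩ B)ᶜ, μ y)) +
      (phiEnt (∑ y ∈ (A ∪ B), μ y) + phiEnt (∑ y ∈ (A ∪ B)ᶜ, μ y)) := by
  have hmono : ∀ C D : Finset X, C ⊆ D → ∑ y ∈ C, μ y ≤ ∑ y ∈ D, μ y := fun C D h =>
    Finset.sum_le_sum_of_subset_of_nonneg h (fun y _ _ => hμ y)
  have hnn : ∀ C : Finset X, 0 ≤ ∑ y ∈ C, μ y := fun C =>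
    Finset.sum_nonneg (fun y _ => hμ y)
  have h1 : phiEnt (∑ y ∈ A, μ y) + phiEnt (∑ y ∈ B, μ y) ≤
      phiEnt (∑ y ∈ (A ∩ B), μ y) + phiEnt (∑ y ∈ (A ∪ B), μ y) := by
    refine convex4 phi_convex (hnn _) (hmono _ _ Finset.inter_subset_left)
      (hmono _ _ Finset.inter_subset_right) ?_
    rw [add_comm]
    exact Finset.sum_union_inter
  have h2 : phiEnt (∑ y ∈ Aᶜ, μ y) + phiEnt (∑ y ∈ Bᶜ, μ y) ≤
      phiEnt (∑ y ∈ (A ∪ B)ᶜ, μ y) + phiEnt (∑ y ∈ (A ∩ B)ᶜ, μ y) := by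
    refine convex4 phi_convex (hnn _) ?_ ?_ ?_
    · exact hmono _ _ (Finset.compl_subset_compl.2 Finset.subset_union_left)
    · exact hmono _ _ (Finset.compl_subset_compl.2 Finset.subset_union_right)
    · rw [Finset.compl_union, Finset.compl_inter, add_comm]
      exact Finset.sum_union_inter
  linarith

private lemma plog {p m : ℝ} (hp : 0 ≤ p) (hm : 0 < m) :
    p * Real.log (p / m) = phiEnt p - p * Real.log m := by
  rcases eq_or_lt_of_le hp with h | h
  · simp [← h, phiEnt]
  · rw [Real.log_div (ne_of_gt h) (ne_of_gt hm), phiEnt]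
    ring

/-- D_KL^π(PG_S ‖ Π) = T(S) − U(S), with T and U supermodular. -/
theorem stmt14 [Fintype X] [DecidableEq X] (π : X → ℝ)
    (hπ : ∀ x, 0 < π x) (hsum : ∑ x, π x = 1)
    (P : Matrix X X ℝ) (hP : IsReversible π P) :
    (∀ S : Finset X, S ≠ ∅ → S ≠ Finset.univ →
      klDiv π (P * gibbsTwo π S) (Pimat π) = Tfun π P S - Ufun π S) ∧
    Supermodular (Tfun π P) ∧ Supermodular (Ufun π) := by
  obtain ⟨⟨hPnn, hProw⟩, hrev⟩ := hP
  have hstat : ∀ y, ∑ x, π x * P x y = π y := by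
    intro y
    calc ∑ x, π x * P x y = ∑ x, π y * P y x := by
          exact Finset.sum_congr rfl fun x _ => hrev x y
      _ = π y := by rw [← Finset.mul_sum, hProw, mul_one]
  refine ⟨?_, ?_, ?_⟩
  · intro S hne huniv
    have hmS : 0 < mass π S := by
      obtain ⟨a, ha⟩ := Finset.nonempty_iff_ne_empty.2 hne
      exact Finset.sum_pos (fun x _ => hπ x) ⟨a, ha⟩
    have hmSc : 0 < mass π Sᶜ := by
      have : Sᶜ ≠ ∅ := by
        simp only [ne_eq, Finset.compl_eq_empty_iff]
        exact huniv
      obtain ⟨a, ha⟩ := Finset.nonempty_iff_ne_empty.2 this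
      exact Finset.sum_pos (fun x _ => hπ x) ⟨a, ha⟩
    have hQ : ∀ x y, (P * gibbsTwo π S) x y =
        if y ∈ S then (∑ z ∈ S, P x z) * (π y / mass π S)
        else (∑ z ∈ Sᶜ, P x z) * (π y / mass π Sᶜ) := by
      intro x y
      rw [Matrix.mul_apply]
      by_cases hy : y ∈ S
      · simp only [gibbsTwo, Matrix.of_apply, hy, if_pos, if_true]
        rw [Finset.sum_mul]
        rw [← Finset.sum_add_sum_compl S]
        have h2 : ∑ z ∈ Sᶜ, P x z * (if z ∈ S then π y / mass π S else 0) = 0 := by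
          apply Finset.sum_eq_zero
          intro z hz
          rw [Finset.mem_compl] at hz
          simp [hz]
        rw [h2, add_zero]
        exact Finset.sum_congr rfl fun z hz => by simp [hz]
      · simp only [gibbsTwo, Matrix.of_apply, hy, if_false]
        rw [Finset.sum_mul]
        rw [← Finset.sum_add_sum_compl S]
        have h1 : ∑ z ∈ S, P x z * (if z ∈ S then (0:ℝ) else π y / mass π Sᶜ) = 0 := by
          apply Finset.sum_eq_zero
          intro z hz
          simp [hz]
        rw [h1, zero_add]
        refine Finset.sum_congr rfl fun z hz => by
          rw [Finset.mem_compl] at hz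
          simp [hz]
    -- inner computation
    have hinner : ∀ x, ∑ y, π x * (P * gibbsTwo π S) x y *
        Real.log ((P * gibbsTwo π S) x y / Pimat π x y) =
        π x * (phiEnt (∑ y ∈ S, P x y) + phiEnt (∑ y ∈ Sᶜ, P x y))
          - π x * (∑ y ∈ S, P x y) * Real.log (mass π S)
          - π x * (∑ y ∈ Sᶜ, P x y) * Real.log (mass π Sᶜ) := by
      intro x
      set p := ∑ y ∈ S, P x y with hp
      set q := ∑ y ∈ Sᶜ, P x y with hq
      have hp0 : 0 ≤ p := Finset.sum_nonneg fun y _ => hPnn x y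
      have hq0 : 0 ≤ q := Finset.sum_nonneg fun y _ => hPnn x y
      rw [← Finset.sum_add_sum_compl S]
      have hS : ∀ y ∈ S, π x * (P * gibbsTwo π S) x y *
          Real.log ((P * gibbsTwo π S) x y / Pimat π x y)
          = (π x * p * Real.log (p / mass π S) / mass π S) * π y := by
        intro y hy
        rw [hQ x y, if_pos hy]
        have hπy : π y ≠ 0 := ne_of_gt (hπ y)
        have : p * (π y / mass π S) / Pimat π x y = p / mass π S := by
          show p * (π y / mass π S) / π y = p / mass π S
          field_simp
        rw [this]
        field_simp
        ring
      have hSc : ∀ y ∈ Sᶜ, π x * (P * gibbsTwo π S) x y *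
          Real.log ((P * gibbsTwo π S) x y / Pimat π x y)
          = (π x * q * Real.log (q / mass π Sᶜ) / mass π Sᶜ) * π y := by
        intro y hy
        rw [Finset.mem_compl] at hy
        rw [hQ x y, if_neg hy]
        have hπy : π y ≠ 0 := ne_of_gt (hπ y)
        have : q * (π y / mass π Sᶜ) / Pimat π x y = q / mass π Sᶜ := by
          show q * (π y / mass π Sᶜ) / π y = q / mass π Sᶜ
          field_simp
        rw [this]
        field_simp
        ring
      rw [Finset.sum_congr rfl hS, Finset.sum_congr rfl hSc,
        ← Finset.mul_sum, ← Finset.mul_sum]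
      show π x * p * Real.log (p / mass π S) / mass π S * mass π S +
        π x * q * Real.log (q / mass π Sᶜ) / mass π Sᶜ * mass π Sᶜ = _
      rw [div_mul_cancel₀ _ (ne_of_gt hmS), div_mul_cancel₀ _ (ne_of_gt hmSc)]
      rw [mul_assoc (π x) p, mul_assoc (π x) q, plog hp0 hmS, plog hq0 hmSc]
      ring
    have hPS : ∑ x, π x * ∑ y ∈ S, P x y = mass π S := by
      calc ∑ x, π x * ∑ y ∈ S, P x y = ∑ x, ∑ y ∈ S, π x * P x y := by
            simp_rw [Finset.mul_sum]
        _ = ∑ y ∈ S, ∑ x, π x * P x y := Finset.sum_comm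
        _ = ∑ y ∈ S, π y := Finset.sum_congr rfl fun y _ => hstat y
    have hPSc : ∑ x, π x * ∑ y ∈ Sᶜ, P x y = mass π Sᶜ := by
      calc ∑ x, π x * ∑ y ∈ Sᶜ, P x y = ∑ x, ∑ y ∈ Sᶜ, π x * P x y := by
            simp_rw [Finset.mul_sum]
        _ = ∑ y ∈ Sᶜ, ∑ x, π x * P x y := Finset.sum_comm
        _ = ∑ y ∈ Sᶜ, π y := Finset.sum_congr rfl fun y _ => hstat y
    rw [klDiv, Finset.sum_congr rfl fun x _ => hinner x]
    rw [Finset.sum_sub_distrib, Finset.sum_sub_distrib]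
    rw [← Finset.sum_mul, ← Finset.sum_mul, hPS, hPSc]
    simp only [Tfun, Ufun, phiEnt]
    ring
  · intro A B
    simp only [Tfun]
    rw [← Finset.sum_add_distrib, ← Finset.sum_add_distrib]
    refine Finset.sum_le_sum fun x _ => ?_
    have h := key_super (fun y => P x y) (fun y => hPnn x y) A B
    calc π x * (phiEnt (∑ y ∈ A, P x y) + phiEnt (∑ y ∈ Aᶜ, P x y)) +
          π x * (phiEnt (∑ y ∈ B, P x y) + phiEnt (∑ y ∈ Bᶜ, P x y))
        = π x * ((phiEnt (∑ y ∈ A, P x y) + phiEnt (∑ y ∈ Aᶜ, P x y)) +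
          (phiEnt (∑ y ∈ B, P x y) + phiEnt (∑ y ∈ Bᶜ, P x y))) := by ring
      _ ≤ π x * ((phiEnt (∑ y ∈ (A ∩ B), P x y) + phiEnt (∑ y ∈ (A ∩ B)ᶜ, P x y)) +
          (phiEnt (∑ y ∈ (A ∪ B), P x y) + phiEnt (∑ y ∈ (A ∪ B)ᶜ, P x y))) :=
          mul_le_mul_of_nonneg_left h (le_of_lt (hπ x))
      _ = _ := by ring
  · intro A B
    simp only [Ufun, mass]
    have h := key_super π (fun y => le_of_lt (hπ y)) A B
    linarith


end
end GpgStmt
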